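/- arXiv:1102.3952 — 4 statements merged into one kernel-verified Lean document; each statement's English description precedes it below -/
import Mathlib

section
/- The following identity of ℤ-linear endomorphisms of M_n holds: E1⁺∘F1⁺ + E1⁻∘F1⁻ + F1⁺∘E1⁻ + F1⁻∘E1⁺ + H1⁻ = E1⁺∘F1⁻ + E1⁻∘F1⁺ + F1⁺∘E1⁺ + F1⁻∘E1⁻ + H1⁺. (Decategorified content of Theorem 3.4(2)(a), lifting the relation e_1 f_1 − f_1 e_1 = h_1.) -/
/-- The free `ℤ`-module on the sequences `a : Fin n → Fin 8`, modelling the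
Grothendieck group `K(𝒪ⁿ)` with basis the classes `b_a` of Verma modules. -/
abbrev GrGroup (n : ℕ) : Type := (Fin n → Fin 8) →₀ ℤ

/-- The basis element `b_a` of the Grothendieck group model. -/
noncomputable def bclass {n : ℕ} (a : Fin n → Fin 8) : GrGroup n := Finsupp.single a 1

/-- The integers `c₁(a), c₂(a), c₃(a)` attached to a sequence `a : Fin n → Fin 8`:
`c₁(a) = #{m : aₘ ∈ {4,5}} − #{m : aₘ ∈ {2,3}}`,
`c₂(a) = #{m : aₘ ∈ {2,6}} − #{m : aₘ ∈ {1,5}}`,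
`c₃(a) = #{m : aₘ odd} − #{m : aₘ even}`. -/
def cseq {n : ℕ} : Fin 3 → (Fin n → Fin 8) → ℤ
  | 0, a => ((Finset.univ.filter fun m => a m = 4 ∨ a m = 5).card : ℤ) -
      ((Finset.univ.filter fun m => a m = 2 ∨ a m = 3).card : ℤ)
  | 1, a => ((Finset.univ.filter fun m => a m = 2 ∨ a m = 6).card : ℤ) -
      ((Finset.univ.filter fun m => a m = 1 ∨ a m = 5).card : ℤ)
  | 2, a => ((Finset.univ.filter fun m => (a m : ℕ) % 2 = 1).card : ℤ) -
      ((Finset.univ.filter fun m => (a m : ℕ) % 2 = 0).card : ℤ)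

/-- `Hᵢ⁺` acts on the basis element `b_a` by the scalar `max(cᵢ(a), 0)`. -/
noncomputable def Hplus (n : ℕ) (i : Fin 3) : GrGroup n →ₗ[ℤ] GrGroup n :=
  Finsupp.lift (GrGroup n) ℤ (Fin n → Fin 8) (fun a => max (cseq i a) 0 • bclass a)

/-- `Hᵢ⁻` acts on the basis element `b_a` by the scalar `max(−cᵢ(a), 0)`. -/
noncomputable def Hminus (n : ℕ) (i : Fin 3) : GrGroup n →ₗ[ℤ] GrGroup n :=
  Finsupp.lift (GrGroup n) ℤ (Fin n → Fin 8) (fun a => max (-cseq i a) 0 • bclass a)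

/-- `E₁⁺ b_a = Σ_{m : aₘ∈{2,3}} b_{a[m↦aₘ+2]}
+ Σ_{i<j : {aᵢ,aⱼ}={2,3} or {3,4}} b_{a[i↦aᵢ+1][j↦aⱼ+1]}`. -/
noncomputable def E1plus (n : ℕ) : GrGroup n →ₗ[ℤ] GrGroup n :=
  Finsupp.lift (GrGroup n) ℤ (Fin n → Fin 8) (fun a =>
    (∑ m : Fin n, if a m = 2 ∨ a m = 3 then
        bclass (Function.update a m (a m + 2)) else 0) +
    ∑ i : Fin n, ∑ j : Fin n,
      if i < j ∧ ((a i = 2 ∧ a j = 3) ∨ (a i = 3 ∧ a j = 2) ∨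
          (a i = 3 ∧ a j = 4) ∨ (a i = 4 ∧ a j = 3)) then
        bclass (Function.update (Function.update a i (a i + 1)) j (a j + 1)) else 0)

/-- `E₁⁻ b_a = Σ_{i<j : {aᵢ,aⱼ}={2,3} or {3,4}} b_{a[i↦aᵢ+1][j↦aⱼ+1]}`. -/
noncomputable def E1minus (n : ℕ) : GrGroup n →ₗ[ℤ] GrGroup n :=
  Finsupp.lift (GrGroup n) ℤ (Fin n → Fin 8) (fun a =>
    ∑ i : Fin n, ∑ j : Fin n,
      if i < j ∧ ((a i = 2 ∧ a j = 3) ∨ (a i = 3 ∧ a j = 2) ∨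
          (a i = 3 ∧ a j = 4) ∨ (a i = 4 ∧ a j = 3)) then
        bclass (Function.update (Function.update a i (a i + 1)) j (a j + 1)) else 0)


/-- `F₁⁺ b_a = Σ_{m : aₘ∈{4,5}} b_{a[m↦aₘ−2]}
+ Σ_{i<j : {aᵢ,aⱼ}={3,4} or {4,5}} b_{a[i↦aᵢ−1][j↦aⱼ−1]}`. -/
noncomputable def F1plus (n : ℕ) : GrGroup n →ₗ[ℤ] GrGroup n :=
  Finsupp.lift (GrGroup n) ℤ (Fin n → Fin 8) (fun a =>
    (∑ m : Fin n, if a m = 4 ∨ a m = 5 then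
        bclass (Function.update a m (a m - 2)) else 0) +
    ∑ i : Fin n, ∑ j : Fin n,
      if i < j ∧ ((a i = 3 ∧ a j = 4) ∨ (a i = 4 ∧ a j = 3) ∨
          (a i = 4 ∧ a j = 5) ∨ (a i = 5 ∧ a j = 4)) then
        bclass (Function.update (Function.update a i (a i - 1)) j (a j - 1)) else 0)

/-- `F₁⁻ b_a = Σ_{i<j : {aᵢ,aⱼ}={3,4} or {4,5}} b_{a[i↦aᵢ−1][j↦aⱼ−1]}`. -/
noncomputable def F1minus (n : ℕ) : GrGroup n →ₗ[ℤ] GrGroup n :=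
  Finsupp.lift (GrGroup n) ℤ (Fin n → Fin 8) (fun a =>
    ∑ i : Fin n, ∑ j : Fin n,
      if i < j ∧ ((a i = 3 ∧ a j = 4) ∨ (a i = 4 ∧ a j = 3) ∨
          (a i = 4 ∧ a j = 5) ∨ (a i = 5 ∧ a j = 4)) then
        bclass (Function.update (Function.update a i (a i - 1)) j (a j - 1)) else 0)



/-! ### Auxiliary material for the proof -/

/-- The single-site part of `E₁⁺`. -/
noncomputable def Esing (n : ℕ) : GrGroup n →ₗ[ℤ] GrGroup n :=
  Finsupp.lift (GrGroup n) ℤ (Fin n → Fin 8) (fun a =>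
    ∑ m : Fin n, if a m = 2 ∨ a m = 3 then
        bclass (Function.update a m (a m + 2)) else 0)

/-- The single-site part of `F₁⁺`. -/
noncomputable def Fsing (n : ℕ) : GrGroup n →ₗ[ℤ] GrGroup n :=
  Finsupp.lift (GrGroup n) ℤ (Fin n → Fin 8) (fun a =>
    ∑ m : Fin n, if a m = 4 ∨ a m = 5 then
        bclass (Function.update a m (a m - 2)) else 0)

lemma lift_bclass {n : ℕ} (g : (Fin n → Fin 8) → GrGroup n) (a : Fin n → Fin 8) :
    Finsupp.lift (GrGroup n) ℤ (Fin n → Fin 8) g (bclass a) = g a := by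
  simp [bclass, Finsupp.lift_apply, Finsupp.sum_single_index]

lemma E1plus_eq (n : ℕ) : E1plus n = Esing n + E1minus n := by
  unfold E1plus Esing E1minus
  rw [← map_add]
  rfl

lemma F1plus_eq (n : ℕ) : F1plus n = Fsing n + F1minus n := by
  unfold F1plus Fsing F1minus
  rw [← map_add]
  rfl

lemma Esing_bclass {n : ℕ} (a : Fin n → Fin 8) :
    Esing n (bclass a) = ∑ m : Fin n, if a m = 2 ∨ a m = 3 then
        bclass (Function.update a m (a m + 2)) else 0 :=
  lift_bclass _ a

lemma Fsing_bclass {n : ℕ} (a : Fin n → Fin 8) :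
    Fsing n (bclass a) = ∑ m : Fin n, if a m = 4 ∨ a m = 5 then
        bclass (Function.update a m (a m - 2)) else 0 :=
  lift_bclass _ a

lemma ite_sum' {α M : Type*} [AddCommMonoid M] (s : Finset α) (c : Prop) [Decidable c]
    (f : α → M) : (if c then ∑ x ∈ s, f x else 0) = ∑ x ∈ s, if c then f x else 0 := by
  split_ifs <;> simp

lemma key_core (n : ℕ) (a : Fin n → Fin 8) :
    Esing n (Fsing n (bclass a)) + Hminus n 0 (bclass a)
      = Fsing n (Esing n (bclass a)) + Hplus n 0 (bclass a) := by
  classical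
  -- abbreviations
  set v : Fin n → (Fin n → Fin 8) := fun m' => Function.update a m' (a m' - 2) with hv
  set u : Fin n → (Fin n → Fin 8) := fun m => Function.update a m (a m + 2) with hu
  set A : Fin n → Fin n → GrGroup n := fun m' m =>
    if (a m' = 4 ∨ a m' = 5) ∧ (v m' m = 2 ∨ v m' m = 3) then
      bclass (Function.update (v m') m (v m' m + 2)) else 0 with hA
  set B : Fin n → Fin n → GrGroup n := fun m m' =>
    if (a m = 2 ∨ a m = 3) ∧ (u m m' = 4 ∨ u m m' = 5) then
      bclass (Function.update (u m) m' (u m m' - 2)) else 0 with hB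
  have hEF : Esing n (Fsing n (bclass a)) = ∑ m' : Fin n, ∑ m : Fin n, A m' m := by
    rw [Fsing_bclass, map_sum]
    refine Finset.sum_congr rfl fun m' _ => ?_
    rw [apply_ite (Esing n), map_zero, Esing_bclass, ite_sum']
    exact Finset.sum_congr rfl fun m _ => by simp only [hA, hv, ite_and]
  have hFE : Fsing n (Esing n (bclass a)) = ∑ m : Fin n, ∑ m' : Fin n, B m m' := by
    rw [Esing_bclass, map_sum]
    refine Finset.sum_congr rfl fun m _ => ?_
    rw [apply_ite (Fsing n), map_zero, Fsing_bclass, ite_sum']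
    exact Finset.sum_congr rfl fun m' _ => by simp only [hB, hu, ite_and]
  -- off-diagonal terms agree
  have offdiag : ∀ m m' : Fin n, m' ≠ m → A m' m = B m m' := by
    intro m m' hne
    have h1 : Function.update a m' (a m' - 2) m = a m := Function.update_of_ne hne.symm _ _
    have h2 : Function.update a m (a m + 2) m' = a m' := Function.update_of_ne hne _ _
    simp only [hA, hB, hv, hu]
    rw [h1, h2]
    exact if_congr and_comm (by rw [Function.update_comm hne]) rfl
  -- diagonal terms
  have diagA : ∀ m : Fin n, A m m = if a m = 4 ∨ a m = 5 then bclass a else 0 := by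
    intro m
    have h1 : v m m = a m - 2 := Function.update_self _ _ _
    simp only [hA, h1]
    by_cases h : a m = 4 ∨ a m = 5
    · have h2 : a m - 2 = 2 ∨ a m - 2 = 3 := by rcases h with h | h <;> rw [h] <;> decide
      have h3 : (a m - 2) + 2 = a m := by rcases h with h | h <;> rw [h] <;> decide
      rw [if_pos ⟨h, h2⟩, if_pos h]
      congr 1
      simp only [hv]
      rw [Function.update_idem, h3, Function.update_eq_self]
    · rw [if_neg (fun hc => h hc.1), if_neg h]
  have diagB : ∀ m : Fin n, B m m = if a m = 2 ∨ a m = 3 then bclass a else 0 := by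
    intro m
    have h1 : u m m = a m + 2 := Function.update_self _ _ _
    simp only [hB, h1]
    by_cases h : a m = 2 ∨ a m = 3
    · have h2 : a m + 2 = 4 ∨ a m + 2 = 5 := by rcases h with h | h <;> rw [h] <;> decide
      have h3 : (a m + 2) - 2 = a m := by rcases h with h | h <;> rw [h] <;> decide
      rw [if_pos ⟨h, h2⟩, if_pos h]
      congr 1
      simp only [hu]
      rw [Function.update_idem, h3, Function.update_eq_self]
    · rw [if_neg (fun hc => h hc.1), if_neg h]
  -- split off the diagonal
  have splitA : ∑ m' : Fin n, ∑ m : Fin n, A m' m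
      = (∑ m : Fin n, A m m) + ∑ m : Fin n, ∑ m' ∈ Finset.univ.erase m, A m' m := by
    rw [Finset.sum_comm, ← Finset.sum_add_distrib]
    exact Finset.sum_congr rfl fun m _ =>
      (Finset.add_sum_erase _ (fun m' => A m' m) (Finset.mem_univ m)).symm
  have splitB : ∑ m : Fin n, ∑ m' : Fin n, B m m'
      = (∑ m : Fin n, B m m) + ∑ m : Fin n, ∑ m' ∈ Finset.univ.erase m, B m m' := by
    rw [← Finset.sum_add_distrib]
    exact Finset.sum_congr rfl fun m _ =>
      (Finset.add_sum_erase _ (fun m' => B m m') (Finset.mem_univ m)).symm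
  have hoff : ∑ m : Fin n, ∑ m' ∈ Finset.univ.erase m, A m' m
      = ∑ m : Fin n, ∑ m' ∈ Finset.univ.erase m, B m m' :=
    Finset.sum_congr rfl fun m _ => Finset.sum_congr rfl fun m' hm' =>
      offdiag m m' (Finset.ne_of_mem_erase hm')
  -- diagonal sums as multiples of bclass a
  have sumA : ∑ m : Fin n, A m m
      = ((Finset.univ.filter fun m => a m = 4 ∨ a m = 5).card : ℤ) • bclass a := by
    rw [Finset.sum_congr rfl fun m _ => diagA m, ← Finset.sum_filter, Finset.sum_const,
      Nat.cast_smul_eq_nsmul]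
  have sumB : ∑ m : Fin n, B m m
      = ((Finset.univ.filter fun m => a m = 2 ∨ a m = 3).card : ℤ) • bclass a := by
    rw [Finset.sum_congr rfl fun m _ => diagB m, ← Finset.sum_filter, Finset.sum_const,
      Nat.cast_smul_eq_nsmul]
  -- the H-operators on the basis vector
  have hHm : Hminus n 0 (bclass a) = max (-cseq 0 a) 0 • bclass a := lift_bclass _ a
  have hHp : Hplus n 0 (bclass a) = max (cseq 0 a) 0 • bclass a := lift_bclass _ a
  rw [hEF, hFE, splitA, splitB, hoff, sumA, sumB, hHm, hHp]
  have hc : cseq 0 a = ((Finset.univ.filter fun m => a m = 4 ∨ a m = 5).card : ℤ)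
      - ((Finset.univ.filter fun m => a m = 2 ∨ a m = 3).card : ℤ) := rfl
  have hmx := max_zero_sub_eq_self (cseq 0 a)
  have hsc : ((Finset.univ.filter fun m => a m = 4 ∨ a m = 5).card : ℤ) + max (-cseq 0 a) 0
      = ((Finset.univ.filter fun m => a m = 2 ∨ a m = 3).card : ℤ) + max (cseq 0 a) 0 := by
    linarith
  have hsm : ((Finset.univ.filter fun m => a m = 4 ∨ a m = 5).card : ℤ) • bclass a
        + max (-cseq 0 a) 0 • bclass a
      = ((Finset.univ.filter fun m => a m = 2 ∨ a m = 3).card : ℤ) • bclass a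
        + max (cseq 0 a) 0 • bclass a := by
    rw [← add_smul, ← add_smul, hsc]
  calc _ = (((Finset.univ.filter fun m => a m = 4 ∨ a m = 5).card : ℤ) • bclass a
          + max (-cseq 0 a) 0 • bclass a)
          + ∑ m : Fin n, ∑ m' ∈ Finset.univ.erase m, B m m' := by abel
  _ = (((Finset.univ.filter fun m => a m = 2 ∨ a m = 3).card : ℤ) • bclass a
          + max (cseq 0 a) 0 • bclass a)
          + ∑ m : Fin n, ∑ m' ∈ Finset.univ.erase m, B m m' := by rw [hsm]
  _ = _ := by abel

lemma key (n : ℕ) : Esing n ∘ₗ Fsing n + Hminus n 0 = Fsing n ∘ₗ Esing n + Hplus n 0 := by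
  apply Finsupp.lhom_ext
  intro a b
  have hb : (Finsupp.single a b : GrGroup n) = b • bclass a := by
    simp [bclass, Finsupp.smul_single]
  rw [hb, map_smul, map_smul]
  congr 1
  simpa using key_core n a

/-- Decategorified Theorem 3.4(2)(a):
`E₁⁺∘F₁⁺ + E₁⁻∘F₁⁻ + F₁⁺∘E₁⁻ + F₁⁻∘E₁⁺ + H₁⁻ = E₁⁺∘F₁⁻ + E₁⁻∘F₁⁺ + F₁⁺∘E₁⁺ + F₁⁻∘E₁⁻ + H₁⁺`,
lifting the relation `e₁f₁ − f₁e₁ = h₁`. -/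
theorem EF1_relation (n : ℕ) (hn : 0 < n) :
    E1plus n ∘ₗ F1plus n + E1minus n ∘ₗ F1minus n +
        F1plus n ∘ₗ E1minus n + F1minus n ∘ₗ E1plus n + Hminus n 0 =
      E1plus n ∘ₗ F1minus n + E1minus n ∘ₗ F1plus n +
        F1plus n ∘ₗ E1plus n + F1minus n ∘ₗ E1minus n + Hplus n 0 := by
  have hk := key n
  rw [E1plus_eq, F1plus_eq]
  simp only [LinearMap.add_comp, LinearMap.comp_add]
  rw [← sub_eq_zero]
  calc _ = Esing n ∘ₗ Fsing n + Hminus n 0 - (Fsing n ∘ₗ Esing n + Hplus n 0) := by abel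
  _ = 0 := sub_eq_zero.mpr hk
end

section
/- The following identity of ℤ-linear endomorphisms of M_n holds: H1⁺∘E1⁺ + H1⁻∘E1⁻ + E1⁺∘H1⁻ + E1⁻∘H1⁺ + 2·E1⁻ = H1⁺∘E1⁻ + H1⁻∘E1⁺ + E1⁺∘H1⁺ + E1⁻∘H1⁻ + 2·E1⁺. (Decategorified content of Theorem 3.4(3)(a), lifting the relation h_1 e_1 − e_1 h_1 = 2e_1.) -/
section Helpers
variable {n : ℕ}

/-- Pointwise weight whose sum over positions computes `c₁`. -/
def wt1 : Fin 8 → ℤ := fun v => (if v = 4 ∨ v = 5 then 1 else 0) - (if v = 2 ∨ v = 3 then 1 else 0)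

lemma cseq0_eq_sum (a : Fin n → Fin 8) : cseq 0 a = ∑ m : Fin n, wt1 (a m) := by
  simp only [cseq, wt1, Finset.sum_sub_distrib, Finset.sum_boole]

lemma cseq0_update (a : Fin n → Fin 8) (m : Fin n) (k : Fin 8) :
    cseq 0 (Function.update a m k) = cseq 0 a + wt1 k - wt1 (a m) := by
  have h : (fun x => wt1 (Function.update a m k x)) =
      Function.update (fun x => wt1 (a x)) m (wt1 k) := by
    funext x
    by_cases h : x = m
    · subst h; simp
    · simp [Function.update_of_ne h]
  rw [cseq0_eq_sum, cseq0_eq_sum, h, Finset.sum_update_of_mem (Finset.mem_univ m),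
    Finset.sum_eq_sum_sdiff_singleton_add (Finset.mem_univ m) (fun x => wt1 (a x))]
  ring

lemma wt1_2 : wt1 2 = -1 := by decide
lemma wt1_3 : wt1 3 = -1 := by decide
lemma wt1_4 : wt1 4 = 1 := by decide
lemma wt1_5 : wt1 5 = 1 := by decide

lemma cseq0_single (a : Fin n → Fin 8) (m : Fin n) (h : a m = 2 ∨ a m = 3) :
    cseq 0 (Function.update a m (a m + 2)) = cseq 0 a + 2 := by
  rcases h with h | h <;> rw [cseq0_update, h] <;>
    simp only [show ((2:Fin 8)+2) = 4 from rfl, show ((3:Fin 8)+2) = 5 from rfl,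
      wt1_2, wt1_3, wt1_4, wt1_5] <;> ring

lemma cseq0_double (a : Fin n → Fin 8) (i j : Fin n) (hij : i < j)
    (h : (a i = 2 ∧ a j = 3) ∨ (a i = 3 ∧ a j = 2) ∨
        (a i = 3 ∧ a j = 4) ∨ (a i = 4 ∧ a j = 3)) :
    cseq 0 (Function.update (Function.update a i (a i + 1)) j (a j + 1)) = cseq 0 a + 2 := by
  have hne : i ≠ j := ne_of_lt hij
  rw [cseq0_update, cseq0_update, Function.update_of_ne (Ne.symm hne)]
  rcases h with ⟨h1, h2⟩ | ⟨h1, h2⟩ | ⟨h1, h2⟩ | ⟨h1, h2⟩ <;> rw [h1, h2] <;>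
    simp only [show ((2:Fin 8)+1) = 3 from rfl, show ((3:Fin 8)+1) = 4 from rfl,
      show ((4:Fin 8)+1) = 5 from rfl, wt1_2, wt1_3, wt1_4, wt1_5] <;> ring

lemma lift_single (g : (Fin n → Fin 8) → GrGroup n) (a : Fin n → Fin 8) :
    Finsupp.lift (GrGroup n) ℤ (Fin n → Fin 8) g (bclass a) = g a := by
  simp [bclass]

lemma Hplus_single (a : Fin n → Fin 8) :
    Hplus n 0 (bclass a) = max (cseq 0 a) 0 • bclass a := lift_single _ a

lemma Hminus_single (a : Fin n → Fin 8) :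
    Hminus n 0 (bclass a) = max (-cseq 0 a) 0 • bclass a := lift_single _ a

lemma comp_E1minus (φ : ℤ → ℤ) (L : GrGroup n →ₗ[ℤ] GrGroup n)
    (hL : ∀ b, L (bclass b) = φ (cseq 0 b) • bclass b) (a : Fin n → Fin 8) :
    L (E1minus n (bclass a)) = φ (cseq 0 a + 2) • E1minus n (bclass a) := by
  rw [E1minus, lift_single, map_sum, Finset.smul_sum]
  refine Finset.sum_congr rfl fun i _ => ?_
  rw [map_sum, Finset.smul_sum]
  refine Finset.sum_congr rfl fun j _ => ?_
  split_ifs with h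
  · rw [hL, cseq0_double a i j h.1 h.2]
  · simp

lemma comp_E1plus (φ : ℤ → ℤ) (L : GrGroup n →ₗ[ℤ] GrGroup n)
    (hL : ∀ b, L (bclass b) = φ (cseq 0 b) • bclass b) (a : Fin n → Fin 8) :
    L (E1plus n (bclass a)) = φ (cseq 0 a + 2) • E1plus n (bclass a) := by
  rw [E1plus, lift_single, map_add, smul_add]
  congr 1
  · rw [map_sum, Finset.smul_sum]
    refine Finset.sum_congr rfl fun m _ => ?_
    split_ifs with h
    · rw [hL, cseq0_single a m h]
    · simp
  · rw [map_sum, Finset.smul_sum]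
    refine Finset.sum_congr rfl fun i _ => ?_
    rw [map_sum, Finset.smul_sum]
    refine Finset.sum_congr rfl fun j _ => ?_
    split_ifs with h
    · rw [hL, cseq0_double a i j h.1 h.2]
    · simp

end Helpers

attribute [irreducible] Hplus Hminus E1plus E1minus bclass

set_option maxHeartbeats 1000000 in
/-- Decategorified Theorem 3.4(3)(a):
`H₁⁺∘E₁⁺ + H₁⁻∘E₁⁻ + E₁⁺∘H₁⁻ + E₁⁻∘H₁⁺ + 2E₁⁻ = H₁⁺∘E₁⁻ + H₁⁻∘E₁⁺ + E₁⁺∘H₁⁺ + E₁⁻∘H₁⁻ + 2E₁⁺`,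
lifting the relation `h₁e₁ − e₁h₁ = 2e₁`. -/
theorem HE1_relation (n : ℕ) (hn : 0 < n) :
    Hplus n 0 ∘ₗ E1plus n + Hminus n 0 ∘ₗ E1minus n +
        E1plus n ∘ₗ Hminus n 0 + E1minus n ∘ₗ Hplus n 0 + 2 • E1minus n =
      Hplus n 0 ∘ₗ E1minus n + Hminus n 0 ∘ₗ E1plus n +
        E1plus n ∘ₗ Hplus n 0 + E1minus n ∘ₗ Hminus n 0 + 2 • E1plus n := by
  apply Finsupp.lhom_ext
  intro a b
  have hb : (Finsupp.single a b : GrGroup n) = b • bclass a := by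
    simp [bclass, Finsupp.smul_single]
  rw [hb, map_smul, map_smul]
  congr 1
  simp only [LinearMap.add_apply, LinearMap.comp_apply, LinearMap.smul_apply]
  rw [Hplus_single, Hminus_single]
  simp only [map_smul]
  rw [comp_E1plus (fun t => max t 0) (Hplus n 0) Hplus_single a,
    comp_E1plus (fun t => max (-t) 0) (Hminus n 0) Hminus_single a,
    comp_E1minus (fun t => max t 0) (Hplus n 0) Hplus_single a,
    comp_E1minus (fun t => max (-t) 0) (Hminus n 0) Hminus_single a]
  match_scalars <;> (simp only [max_def]; split_ifs <;> omega)
end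

section
/- The following identity of ℤ-linear endomorphisms of M_n holds: E3∘E3∘E3∘E2 + 3·(E3∘E2∘E3∘E3) = 3·(E3∘E3∘E2∘E3) + E2∘E3∘E3∘E3. (Decategorified content of Theorem 3.4(5)(e), lifting the Serre relation e_3³e_2 − 3e_3²e_2e_3 + 3e_3e_2e_3² − e_2e_3³ = 0.) -/
/-- `E₂ b_a = Σ_{m : aₘ∈{1,5}} b_{a[m↦aₘ+1]}`. -/
noncomputable def E2op (n : ℕ) : GrGroup n →ₗ[ℤ] GrGroup n :=
  Finsupp.lift (GrGroup n) ℤ (Fin n → Fin 8) (fun a =>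
    ∑ m : Fin n, if a m = 1 ∨ a m = 5 then
      bclass (Function.update a m (a m + 1)) else 0)

/-- `E₃ b_a = Σ_{m : aₘ∈{0,2,4,6}} b_{a[m↦aₘ+1]}`. -/
noncomputable def E3op (n : ℕ) : GrGroup n →ₗ[ℤ] GrGroup n :=
  Finsupp.lift (GrGroup n) ℤ (Fin n → Fin 8) (fun a =>
    ∑ m : Fin n, if a m = 0 ∨ a m = 2 ∨ a m = 4 ∨ a m = 6 then
      bclass (Function.update a m (a m + 1)) else 0)

/-! ### Auxiliary material -/

/-- Local operator acting at position `m`. -/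
noncomputable def locOp (n : ℕ) (P : Fin 8 → Prop) [DecidablePred P] (g : Fin 8 → Fin 8)
    (m : Fin n) : GrGroup n →ₗ[ℤ] GrGroup n :=
  Finsupp.lift (GrGroup n) ℤ (Fin n → Fin 8) (fun a =>
    if P (a m) then bclass (Function.update a m (g (a m))) else 0)

lemma locOp_single {n : ℕ} (P : Fin 8 → Prop) [DecidablePred P] (g : Fin 8 → Fin 8)
    (m : Fin n) (a : Fin n → Fin 8) (c : ℤ) :
    locOp n P g m (Finsupp.single a c) =
      c • (if P (a m) then bclass (Function.update a m (g (a m))) else 0) := by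
  simp [locOp, Finsupp.lift_apply, Finsupp.sum_single_index]

lemma locOp_bclass {n : ℕ} (P : Fin 8 → Prop) [DecidablePred P] (g : Fin 8 → Fin 8)
    (m : Fin n) (a : Fin n → Fin 8) :
    locOp n P g m (bclass a) =
      if P (a m) then bclass (Function.update a m (g (a m))) else 0 := by
  rw [bclass, locOp_single, one_smul]

lemma locOp_commute {n : ℕ} (P Q : Fin 8 → Prop) [DecidablePred P] [DecidablePred Q]
    (g h : Fin 8 → Fin 8) {m m' : Fin n} (hne : m ≠ m') :
    Commute (locOp n P g m) (locOp n Q h m') := by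
  rw [Commute, SemiconjBy]
  apply Finsupp.lhom_ext
  intro a b
  have hb : (Finsupp.single a b : GrGroup n) = b • bclass a := by
    simp [bclass, Finsupp.smul_single]
  rw [Module.End.mul_apply, Module.End.mul_apply, hb, map_smul, map_smul, map_smul, map_smul]
  congr 1
  rw [locOp_bclass, locOp_bclass]
  by_cases hP : P (a m) <;> by_cases hQ : Q (a m')
  · rw [if_pos hP, if_pos hQ, locOp_bclass, locOp_bclass,
      Function.update_of_ne hne, Function.update_of_ne hne.symm, if_pos hP, if_pos hQ,
      Function.update_comm hne.symm]
  · rw [if_pos hP, if_neg hQ, map_zero, locOp_bclass,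
      Function.update_of_ne hne.symm, if_neg hQ]
  · rw [if_neg hP, if_pos hQ, map_zero, locOp_bclass,
      Function.update_of_ne hne, if_neg hP]
  · rw [if_neg hP, if_neg hQ, map_zero, map_zero]

/-- Local `E₂` operator. -/
noncomputable def E2loc {n : ℕ} (m : Fin n) : GrGroup n →ₗ[ℤ] GrGroup n :=
  locOp n (fun k => k = 1 ∨ k = 5) (fun k => k + 1) m

/-- Local `E₃` operator. -/
noncomputable def E3loc {n : ℕ} (m : Fin n) : GrGroup n →ₗ[ℤ] GrGroup n :=
  locOp n (fun k => k = 0 ∨ k = 2 ∨ k = 4 ∨ k = 6) (fun k => k + 1) m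

lemma E2op_eq (n : ℕ) : E2op n = ∑ m : Fin n, E2loc m := by
  apply Finsupp.lhom_ext
  intro a b
  simp [E2op, E2loc, locOp_single, Finsupp.lift_apply, Finsupp.sum_single_index,
    LinearMap.sum_apply, Finset.smul_sum]

lemma E3op_eq (n : ℕ) : E3op n = ∑ m : Fin n, E3loc m := by
  apply Finsupp.lhom_ext
  intro a b
  simp [E3op, E3loc, locOp_single, Finsupp.lift_apply, Finsupp.sum_single_index,
    LinearMap.sum_apply, Finset.smul_sum]

lemma E3loc_sq {n : ℕ} (m : Fin n) : E3loc m * E3loc m = 0 := by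
  apply Finsupp.lhom_ext
  intro a b
  have hb : (Finsupp.single a b : GrGroup n) = b • bclass a := by
    simp [bclass, Finsupp.smul_single]
  rw [Module.End.mul_apply, hb, map_smul, map_smul, LinearMap.zero_apply]
  simp only [E3loc]
  by_cases hP : a m = 0 ∨ a m = 2 ∨ a m = 4 ∨ a m = 6
  · have hnot : ¬ (a m + 1 = 0 ∨ a m + 1 = 2 ∨ a m + 1 = 4 ∨ a m + 1 = 6) := by
      rcases hP with h | h | h | h <;> rw [h] <;> decide
    rw [locOp_bclass, if_pos hP, locOp_bclass, Function.update_self, if_neg hnot, smul_zero]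
  · rw [locOp_bclass, if_neg hP, map_zero, smul_zero]

/-! ### Abstract commutator computation -/

section Ring
variable {R : Type*} [Ring R]

/-- Commutator. -/
def br (a b : R) : R := a * b - b * a

lemma br_sum_left {ι : Type*} [Fintype ι] (x : ι → R) (z : R) :
    br (∑ m, x m) z = ∑ m, br (x m) z := by
  simp [br, Finset.sum_mul, Finset.mul_sum, Finset.sum_sub_distrib]

lemma br_eq_zero_of_commute {a b : R} (h : Commute a b) : br a b = 0 := by
  simp [br, h.eq]

lemma commute_br {a b c : R} (hab : Commute a b) (hac : Commute a c) :
    Commute a (br b c) :=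
  (hab.mul_right hac).sub_right (hac.mul_right hab)

/-- `[X, Σ z_m] = Σ [x_m, z_m]` when `x_m'` commutes with `z_m` for `m' ≠ m`. -/
lemma br_sum {ι : Type*} [Fintype ι] [DecidableEq ι] (x z : ι → R)
    (h : ∀ m m', m ≠ m' → Commute (x m) (z m')) :
    br (∑ m, x m) (∑ m, z m) = ∑ m, br (x m) (z m) := by
  rw [br_sum_left]
  apply Finset.sum_congr rfl
  intro m _
  have : br (x m) (∑ m', z m') = ∑ m', br (x m) (z m') := by
    simp [br, Finset.mul_sum, Finset.sum_mul, Finset.sum_sub_distrib]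
  rw [this]
  rw [Finset.sum_eq_single m]
  · intro m' _ hne
    exact br_eq_zero_of_commute (h m m' (fun e => hne (e.symm)))
  · intro hm
    exact absurd (Finset.mem_univ m) hm

lemma br_br_br_self {x y : R} (h : x * x = 0) : br x (br x (br x y)) = 0 := by
  have h3 : ∀ a : R, x * (x * a) = 0 := fun a => by rw [← mul_assoc, h, zero_mul]
  have h4 : ∀ a : R, a * x * x = 0 := fun a => by rw [mul_assoc, h, mul_zero]
  simp only [br, mul_sub, sub_mul, mul_assoc] at *
  simp [h3, ← mul_assoc, h4]

/-- Abstract Serre-type identity for a sum of pairwise-commuting local operators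
with square-zero `x`. -/
lemma serre_ring {ι : Type*} [Fintype ι] [DecidableEq ι] (x y : ι → R)
    (hxx : ∀ m m', m ≠ m' → Commute (x m) (x m'))
    (hxy : ∀ m m', m ≠ m' → Commute (x m) (y m'))
    (hsq : ∀ m, x m * x m = 0) :
    (∑ m, x m) * ((∑ m, x m) * ((∑ m, x m) * (∑ m, y m))) +
        3 * ((∑ m, x m) * ((∑ m, y m) * ((∑ m, x m) * (∑ m, x m)))) =
      3 * ((∑ m, x m) * ((∑ m, x m) * ((∑ m, y m) * (∑ m, x m)))) +
        (∑ m, y m) * ((∑ m, x m) * ((∑ m, x m) * (∑ m, x m))) := by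
  set X := ∑ m, x m with hXdef
  set Y := ∑ m, y m with hYdef
  have key : br X (br X (br X Y)) = 0 := by
    rw [hXdef, hYdef, br_sum x y hxy]
    rw [br_sum x (fun m => br (x m) (y m)) (fun m m' hne =>
      commute_br (hxx m m' hne) (hxy m m' hne))]
    rw [br_sum x (fun m => br (x m) (br (x m) (y m))) (fun m m' hne =>
      commute_br (hxx m m' hne) (commute_br (hxx m m' hne) (hxy m m' hne)))]
    exact Finset.sum_eq_zero fun m _ => br_br_br_self (hsq m)
  have expand : br X (br X (br X Y)) =
      (X * (X * (X * Y)) + 3 * (X * (Y * (X * X)))) -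
      (3 * (X * (X * (Y * X))) + Y * (X * (X * X))) := by
    simp only [br]
    noncomm_ring
  rw [expand] at key
  exact sub_eq_zero.mp key

end Ring

/-- Decategorified Theorem 3.4(5)(e):
`E₃∘E₃∘E₃∘E₂ + 3(E₃∘E₂∘E₃∘E₃) = 3(E₃∘E₃∘E₂∘E₃) + E₂∘E₃∘E₃∘E₃`,
lifting the Serre relation `e₃³e₂ − 3e₃²e₂e₃ + 3e₃e₂e₃² − e₂e₃³ = 0`. -/
theorem serre_E3E2_relation (n : ℕ) (hn : 0 < n) :
    E3op n ∘ₗ E3op n ∘ₗ E3op n ∘ₗ E2op n + 3 • (E3op n ∘ₗ E2op n ∘ₗ E3op n ∘ₗ E3op n) =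
      3 • (E3op n ∘ₗ E3op n ∘ₗ E2op n ∘ₗ E3op n) + E2op n ∘ₗ E3op n ∘ₗ E3op n ∘ₗ E3op n := by
  have hxx : ∀ m m' : Fin n, m ≠ m' → Commute (E3loc (n := n) m) (E3loc m') :=
    fun m m' hne => locOp_commute _ _ _ _ hne
  have hxy : ∀ m m' : Fin n, m ≠ m' → Commute (E3loc (n := n) m) (E2loc m') :=
    fun m m' hne => locOp_commute _ _ _ _ hne
  have hmain := serre_ring (fun m : Fin n => E3loc (n := n) m) (fun m => E2loc m)
    hxx hxy (fun m => E3loc_sq m)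
  rw [E2op_eq, E3op_eq]
  simp only [← Module.End.mul_eq_comp, nsmul_eq_mul, Nat.cast_ofNat]
  exact hmain
end

section
/- The following identity of ℤ-linear endomorphisms of M_n holds: F3∘F3∘F3∘F2 + 3·(F3∘F2∘F3∘F3) = 3·(F3∘F3∘F2∘F3) + F2∘F3∘F3∘F3. (Decategorified content of Theorem 3.4(6)(e), lifting the Serre relation f_3³f_2 − 3f_3²f_2f_3 + 3f_3f_2f_3² − f_2f_3³ = 0.) -/
/-- `F₂ b_a = Σ_{m : aₘ∈{2,6}} b_{a[m↦aₘ−1]}`. -/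
noncomputable def F2op (n : ℕ) : GrGroup n →ₗ[ℤ] GrGroup n :=
  Finsupp.lift (GrGroup n) ℤ (Fin n → Fin 8) (fun a =>
    ∑ m : Fin n, if a m = 2 ∨ a m = 6 then
      bclass (Function.update a m (a m - 1)) else 0)

/-- `F₃ b_a = Σ_{m : aₘ∈{1,3,5,7}} b_{a[m↦aₘ−1]}`. -/
noncomputable def F3op (n : ℕ) : GrGroup n →ₗ[ℤ] GrGroup n :=
  Finsupp.lift (GrGroup n) ℤ (Fin n → Fin 8) (fun a =>
    ∑ m : Fin n, if a m = 1 ∨ a m = 3 ∨ a m = 5 ∨ a m = 7 then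
      bclass (Function.update a m (a m - 1)) else 0)

-- generic single-site operator attached to a matrix
noncomputable def Eop (n : ℕ) (M : Matrix (Fin 8) (Fin 8) ℤ) : GrGroup n →ₗ[ℤ] GrGroup n :=
  Finsupp.lift (GrGroup n) ℤ (Fin n → Fin 8) (fun a =>
    ∑ m : Fin n, ∑ k : Fin 8, M k (a m) • bclass (Function.update a m k))

lemma Eop_single {n : ℕ} (M : Matrix (Fin 8) (Fin 8) ℤ) (a : Fin n → Fin 8) :
    Eop n M (bclass a) = ∑ m : Fin n, ∑ k : Fin 8, M k (a m) • bclass (Function.update a m k) := by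
  simp [Eop, bclass, Finsupp.lift_apply, Finsupp.sum_single_index]

noncomputable def crossTerm {n : ℕ} (M N : Matrix (Fin 8) (Fin 8) ℤ) (a : Fin n → Fin 8) :
    GrGroup n :=
  ∑ m' : Fin n, ∑ m : Fin n, if m = m' then 0 else
    ∑ k' : Fin 8, ∑ k : Fin 8,
      (N k' (a m') * M k (a m)) • bclass (Function.update (Function.update a m' k') m k)

lemma crossTerm_symm {n : ℕ} (M N : Matrix (Fin 8) (Fin 8) ℤ) (a : Fin n → Fin 8) :
    crossTerm M N a = crossTerm N M a := by
  unfold crossTerm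
  rw [Finset.sum_comm]
  refine Finset.sum_congr rfl fun m _ => Finset.sum_congr rfl fun m' _ => ?_
  by_cases h : m = m'
  · simp [h, eq_comm]
  · rw [if_neg h, if_neg (Ne.symm h), Finset.sum_comm]
    refine Finset.sum_congr rfl fun k _ => Finset.sum_congr rfl fun k' _ => ?_
    rw [mul_comm, Function.update_comm h]

lemma Eop_comp_single {n : ℕ} (M N : Matrix (Fin 8) (Fin 8) ℤ) (a : Fin n → Fin 8) :
    Eop n M (Eop n N (bclass a)) = Eop n (M * N) (bclass a) + crossTerm M N a := by
  rw [Eop_single, map_sum]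
  have step : ∀ m' : Fin n,
      Eop n M (∑ k' : Fin 8, N k' (a m') • bclass (Function.update a m' k')) =
      (∑ k : Fin 8, (M * N) k (a m') • bclass (Function.update a m' k)) +
      ∑ m : Fin n, if m = m' then 0 else
        ∑ k' : Fin 8, ∑ k : Fin 8,
          (N k' (a m') * M k (a m)) • bclass (Function.update (Function.update a m' k') m k) := by
    intro m'
    rw [map_sum]
    have inner : ∀ k' : Fin 8,
        Eop n M (N k' (a m') • bclass (Function.update a m' k')) =
        ∑ m : Fin n, ∑ k : Fin 8,
          (N k' (a m') * M k (Function.update a m' k' m)) •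
            bclass (Function.update (Function.update a m' k') m k) := by
      intro k'
      rw [map_smul, Eop_single, Finset.smul_sum]
      refine Finset.sum_congr rfl fun m _ => ?_
      rw [Finset.smul_sum]
      refine Finset.sum_congr rfl fun k _ => ?_
      rw [smul_smul]
    calc ∑ k' : Fin 8, Eop n M (N k' (a m') • bclass (Function.update a m' k'))
        = ∑ m : Fin n, ∑ k' : Fin 8, ∑ k : Fin 8,
            (N k' (a m') * M k (Function.update a m' k' m)) •
              bclass (Function.update (Function.update a m' k') m k) := by
          rw [← Finset.sum_comm]
          exact Finset.sum_congr rfl fun k' _ => inner k'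
      _ = _ := by
          have hg : ∀ m : Fin n,
              (∑ k' : Fin 8, ∑ k : Fin 8,
                (N k' (a m') * M k (Function.update a m' k' m)) •
                  bclass (Function.update (Function.update a m' k') m k)) =
              (if m = m' then
                ∑ k : Fin 8, (M * N) k (a m') • bclass (Function.update a m' k) else 0) +
              (if m = m' then 0 else
                ∑ k' : Fin 8, ∑ k : Fin 8,
                  (N k' (a m') * M k (a m)) •
                    bclass (Function.update (Function.update a m' k') m k)) := by
            intro m
            by_cases h : m = m'
            · subst h
              rw [if_pos rfl, if_pos rfl, add_zero, Finset.sum_comm]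
              refine Finset.sum_congr rfl fun k _ => ?_
              rw [Matrix.mul_apply, Finset.sum_smul]
              refine Finset.sum_congr rfl fun k' _ => ?_
              rw [Function.update_self, Function.update_idem, mul_comm]
            · rw [if_neg h, if_neg h, zero_add]
              refine Finset.sum_congr rfl fun k' _ => Finset.sum_congr rfl fun k _ => ?_
              rw [Function.update_of_ne h]
          rw [Finset.sum_congr rfl fun m _ => hg m, Finset.sum_add_distrib,
            Finset.sum_ite_eq' Finset.univ m', if_pos (Finset.mem_univ m')]
  rw [Finset.sum_congr rfl fun m' _ => step m']
  rw [Finset.sum_add_distrib, Eop_single]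
  rfl

lemma Eop_sub {n : ℕ} (M N : Matrix (Fin 8) (Fin 8) ℤ) :
    Eop n (M - N) = Eop n M - Eop n N := by
  apply Finsupp.lhom_ext
  intro a b
  have h1 : (Finsupp.single a b : GrGroup n) = b • bclass a := by
    simp [bclass, Finsupp.smul_single]
  simp only [h1, map_smul, LinearMap.sub_apply]
  congr 1
  rw [Eop_single, Eop_single, Eop_single, ← Finset.sum_sub_distrib]
  refine Finset.sum_congr rfl fun m _ => ?_
  rw [← Finset.sum_sub_distrib]
  refine Finset.sum_congr rfl fun k _ => ?_
  rw [Matrix.sub_apply, sub_smul]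

lemma Eop_commutator {n : ℕ} (M N : Matrix (Fin 8) (Fin 8) ℤ) :
    Eop n M * Eop n N - Eop n N * Eop n M = Eop n (M * N - N * M) := by
  rw [Eop_sub]
  apply Finsupp.lhom_ext
  intro a b
  have h1 : (Finsupp.single a b : GrGroup n) = b • bclass a := by
    simp [bclass, Finsupp.smul_single]
  simp only [h1, map_smul, LinearMap.sub_apply, Module.End.mul_apply]
  congr 1
  rw [Eop_comp_single, Eop_comp_single, crossTerm_symm M N]
  abel

def Mtwo : Matrix (Fin 8) (Fin 8) ℤ :=
  fun k j => if (j = 2 ∨ j = 6) ∧ k = j - 1 then 1 else 0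

def Mthree : Matrix (Fin 8) (Fin 8) ℤ :=
  fun k j => if (j = 1 ∨ j = 3 ∨ j = 5 ∨ j = 7) ∧ k = j - 1 then 1 else 0

lemma F2_eq (n : ℕ) : F2op n = Eop n Mtwo := by
  unfold F2op Eop
  congr 1
  funext a
  refine Finset.sum_congr rfl fun m _ => ?_
  by_cases h : a m = 2 ∨ a m = 6
  · rw [if_pos h]
    rw [show (∑ k : Fin 8, Mtwo k (a m) • bclass (Function.update a m k)) =
      ∑ k : Fin 8, if k = a m - 1 then bclass (Function.update a m k) else 0 from
      Finset.sum_congr rfl fun k _ => by simp [Mtwo, h]]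
    rw [Finset.sum_ite_eq' Finset.univ (a m - 1)]
    simp
  · rw [if_neg h]
    refine (Finset.sum_eq_zero fun k _ => ?_).symm
    simp only [Mtwo]
    rw [if_neg (fun hc => h hc.1), zero_smul]

lemma F3_eq (n : ℕ) : F3op n = Eop n Mthree := by
  unfold F3op Eop
  congr 1
  funext a
  refine Finset.sum_congr rfl fun m _ => ?_
  by_cases h : a m = 1 ∨ a m = 3 ∨ a m = 5 ∨ a m = 7
  · rw [if_pos h]
    rw [show (∑ k : Fin 8, Mthree k (a m) • bclass (Function.update a m k)) =
      ∑ k : Fin 8, if k = a m - 1 then bclass (Function.update a m k) else 0 from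
      Finset.sum_congr rfl fun k _ => by simp [Mthree, h]]
    rw [Finset.sum_ite_eq' Finset.univ (a m - 1)]
    simp
  · rw [if_neg h]
    refine (Finset.sum_eq_zero fun k _ => ?_).symm
    simp only [Mthree]
    rw [if_neg (fun hc => h hc.1), zero_smul]


lemma Eop_zero (n : ℕ) : Eop n (0 : Matrix (Fin 8) (Fin 8) ℤ) = 0 := by
  have := Eop_sub (n := n) (0 : Matrix (Fin 8) (Fin 8) ℤ) 0
  rw [sub_zero] at this
  rw [this] at *
  exact sub_self _

/-- Decategorified Theorem 3.4(6)(e):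
`F₃∘F₃∘F₃∘F₂ + 3(F₃∘F₂∘F₃∘F₃) = 3(F₃∘F₃∘F₂∘F₃) + F₂∘F₃∘F₃∘F₃`,
lifting the Serre relation `f₃³f₂ − 3f₃²f₂f₃ + 3f₃f₂f₃² − f₂f₃³ = 0`. -/
theorem serre_F3F2_relation (n : ℕ) (hn : 0 < n) :
    F3op n ∘ₗ F3op n ∘ₗ F3op n ∘ₗ F2op n + 3 • (F3op n ∘ₗ F2op n ∘ₗ F3op n ∘ₗ F3op n) =
      3 • (F3op n ∘ₗ F3op n ∘ₗ F2op n ∘ₗ F3op n) + F2op n ∘ₗ F3op n ∘ₗ F3op n ∘ₗ F3op n := by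
  rw [F2_eq, F3_eq]
  simp only [← Module.End.mul_eq_comp]
  set G := Eop n Mthree with hG
  set F := Eop n Mtwo with hF
  set K1 := Mthree * Mtwo - Mtwo * Mthree with hK1
  set K2 := Mthree * K1 - K1 * Mthree with hK2
  have h1 : G * F - F * G = Eop n K1 := Eop_commutator Mthree Mtwo
  have h2 : G * Eop n K1 - Eop n K1 * G = Eop n K2 := Eop_commutator Mthree K1
  have h3 : G * Eop n K2 - Eop n K2 * G = Eop n (Mthree * K2 - K2 * Mthree) :=
    Eop_commutator Mthree K2
  have hz : Mthree * K2 - K2 * Mthree = 0 := by rw [hK2, hK1]; decide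
  have key : G * (G * (G * F - F * G) - (G * F - F * G) * G) -
      (G * (G * F - F * G) - (G * F - F * G) * G) * G = 0 := by
    rw [h1, h2, h3, hz, Eop_zero]
  rw [← sub_eq_zero]
  calc G * (G * (G * F)) + 3 • (G * (F * (G * G))) -
        (3 • (G * (G * (F * G))) + F * (G * (G * G)))
      = G * (G * (G * F - F * G) - (G * F - F * G) * G) -
        (G * (G * F - F * G) - (G * F - F * G) * G) * G := by noncomm_ring
    _ = 0 := key
end
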